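/- Let ρ be a faithful density matrix that is not maximally mixed, with extreme eigenvalues λ_min, λ_max. For any Hermitian matrices A, B with all diagonal entries zero in an eigenbasis of ρ, (Tr(ρA²))·(Tr(ρB²)) ≥ ((λ_max + λ_min)²/(4(λ_max − λ_min)²))·|Tr(ρ[A,B])|². -/

import Mathlib

open Matrix Finset

/-- Key norm inequality: generalized Robertson relation for Hermitian matrices
with vanishing diagonal, in an eigenbasis of a faithful non-maximally-mixed
diagonal density matrix. -/
theorem gen_robertson_norm {d : ℕ} (l : Fin (d + 1) → ℝ)
    (hmono : Monotone l) (hpos : 0 < l 0) (hne : l 0 < l (Fin.last d))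
    (hsum : ∑ i, l i = 1)
    (A B : Matrix (Fin (d + 1)) (Fin (d + 1)) ℂ)
    (hA : A.IsHermitian) (hB : B.IsHermitian)
    (hAdiag : ∀ i, A i i = 0) (hBdiag : ∀ i, B i i = 0) :
    ((Matrix.diagonal (fun i => (l i : ℂ)) * A * A).trace.re) *
      ((Matrix.diagonal (fun i => (l i : ℂ)) * B * B).trace.re) ≥
    ((l (Fin.last d) + l 0) ^ 2 / (4 * (l (Fin.last d) - l 0) ^ 2)) *
      ‖
        ((Matrix.diagonal (fun i => (l i : ℂ)) * (A * B - B * A)).trace)‖ ^ 2 := by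
  have h0 : ∀ i, l 0 ≤ l i := fun i => hmono (Fin.zero_le i)
  have hlast : ∀ i, l i ≤ l (Fin.last d) := fun i => hmono (Fin.le_last i)
  have hipos : ∀ i, 0 < l i := fun i => lt_of_lt_of_le hpos (h0 i)
  have hD : (0:ℝ) < l (Fin.last d) - l 0 := sub_pos.mpr hne
  have hP : (0:ℝ) < l (Fin.last d) + l 0 := add_pos (hipos _) hpos
  set lm := l 0 with hlm
  set lM := l (Fin.last d) with hlM
  -- trace of diagonal times a matrix
  have tr_diag : ∀ (M : Matrix (Fin (d+1)) (Fin (d+1)) ℂ),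
      (Matrix.diagonal (fun i => (l i : ℂ)) * M).trace = ∑ i, (l i : ℂ) * M i i := by
    intro M
    simp [Matrix.trace, Matrix.diag, Matrix.diagonal_mul]
  -- diagonal entries of A*A
  have mulsq : ∀ (M : Matrix (Fin (d+1)) (Fin (d+1)) ℂ), M.IsHermitian →
      ∀ i, (M * M) i i = ((∑ j, Complex.normSq (M i j) : ℝ) : ℂ) := by
    intro M hM i
    rw [Matrix.mul_apply]
    push_cast
    refine Finset.sum_congr rfl fun j _ => ?_
    rw [← hM.apply j i, Complex.star_def, Complex.mul_conj]
  -- real expressions for Tr(ρ A²), Tr(ρ B²)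
  have trsq : ∀ (M : Matrix (Fin (d+1)) (Fin (d+1)) ℂ), M.IsHermitian →
      ((Matrix.diagonal (fun i => (l i : ℂ)) * M * M).trace).re
        = ∑ i, ∑ j, l i * Complex.normSq (M i j) := by
    intro M hM
    rw [mul_assoc, tr_diag]
    have : ∑ i, (l i : ℂ) * (M * M) i i
        = ((∑ i, ∑ j, l i * Complex.normSq (M i j) : ℝ) : ℂ) := by
      push_cast
      refine Finset.sum_congr rfl fun i _ => ?_
      rw [mulsq M hM i]
      push_cast
      rw [Finset.mul_sum]
    rw [this, Complex.ofReal_re]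
  set X := ∑ i, ∑ j, l i * Complex.normSq (A i j) with hX
  set Y := ∑ i, ∑ j, l i * Complex.normSq (B i j) with hY
  have hXnn : 0 ≤ X := Finset.sum_nonneg fun i _ => Finset.sum_nonneg fun j _ =>
    mul_nonneg (hipos i).le (Complex.normSq_nonneg _)
  have hYnn : 0 ≤ Y := Finset.sum_nonneg fun i _ => Finset.sum_nonneg fun j _ =>
    mul_nonneg (hipos i).le (Complex.normSq_nonneg _)
  -- commutator trace
  set T := (Matrix.diagonal (fun i => (l i : ℂ)) * (A * B - B * A)).trace with hT
  have trC : T = ∑ i, ∑ j, ((l i : ℂ) - (l j : ℂ)) * (A i j * B j i) := by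
    rw [hT, Matrix.mul_sub, Matrix.trace_sub, tr_diag, tr_diag]
    have h1 : ∑ i, (l i : ℂ) * (A * B) i i
        = ∑ i, ∑ j, (l i : ℂ) * (A i j * B j i) := by
      refine Finset.sum_congr rfl fun i _ => ?_
      rw [Matrix.mul_apply, Finset.mul_sum]
    have h2 : ∑ i, (l i : ℂ) * (B * A) i i
        = ∑ i, ∑ j, (l j : ℂ) * (A i j * B j i) := by
      have : ∑ i, (l i : ℂ) * (B * A) i i
          = ∑ i, ∑ j, (l i : ℂ) * (B i j * A j i) := by
        refine Finset.sum_congr rfl fun i _ => ?_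
        rw [Matrix.mul_apply, Finset.mul_sum]
      rw [this, Finset.sum_comm]
      refine Finset.sum_congr rfl fun i _ => Finset.sum_congr rfl fun j _ => by ring
    rw [h1, h2, ← Finset.sum_sub_distrib]
    refine Finset.sum_congr rfl fun i _ => ?_
    rw [← Finset.sum_sub_distrib]
    refine Finset.sum_congr rfl fun j _ => by ring
  -- bound on |T|
  set S := ∑ i, ∑ j, (l i + l j) * (‖A i j‖ * ‖B i j‖) with hS
  have hSnn : 0 ≤ S := Finset.sum_nonneg fun i _ => Finset.sum_nonneg fun j _ =>
    mul_nonneg (add_pos (hipos i) (hipos j)).le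
      (mul_nonneg (norm_nonneg _) (norm_nonneg _))
  have habsT : ‖T‖ * (lM + lm) ≤ (lM - lm) * S := by
    have step1 : ‖T‖
        ≤ ∑ i, ∑ j, |l i - l j| * (‖A i j‖ * ‖B i j‖) := by
      rw [trC]
      refine le_trans (norm_sum_le _ _) (Finset.sum_le_sum fun i _ => ?_)
      refine le_trans (norm_sum_le _ _) (Finset.sum_le_sum fun j _ => ?_)
      rw [norm_mul, norm_mul]
      have h1 : ‖(l i : ℂ) - (l j : ℂ)‖ = |l i - l j| := by
        rw [← Complex.ofReal_sub, Complex.norm_real, Real.norm_eq_abs]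
      have h2 : ‖B j i‖ = ‖B i j‖ := by
        rw [← hB.apply j i, Complex.star_def, Complex.norm_conj]
      rw [h1, h2]
    have step2 : (∑ i, ∑ j, |l i - l j| * (‖A i j‖ * ‖B i j‖))
        * (lM + lm) ≤ (lM - lm) * S := by
      rw [hS, Finset.sum_mul, Finset.mul_sum]
      refine Finset.sum_le_sum fun i _ => ?_
      rw [Finset.sum_mul, Finset.mul_sum]
      refine Finset.sum_le_sum fun j _ => ?_
      have key : |l i - l j| * (lM + lm) ≤ (lM - lm) * (l i + l j) := by
        rcases abs_cases (l i - l j) with ⟨h, _⟩ | ⟨h, _⟩ <;> rw [h] <;>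
          nlinarith [h0 i, h0 j, hlast i, hlast j, hipos i, hipos j]
      have hab : 0 ≤ ‖A i j‖ * ‖B i j‖ :=
        mul_nonneg (norm_nonneg _) (norm_nonneg _)
      calc |l i - l j| * (‖A i j‖ * ‖B i j‖) * (lM + lm)
          = (|l i - l j| * (lM + lm)) * (‖A i j‖ * ‖B i j‖) := by ring
        _ ≤ ((lM - lm) * (l i + l j)) * (‖A i j‖ * ‖B i j‖) :=
            mul_le_mul_of_nonneg_right key hab
        _ = (lM - lm) * ((l i + l j) * (‖A i j‖ * ‖B i j‖)) := by ring
    exact le_trans (mul_le_mul_of_nonneg_right step1 hP.le) step2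
  -- Cauchy–Schwarz
  have symmsum : ∀ (M : Matrix (Fin (d+1)) (Fin (d+1)) ℂ), M.IsHermitian →
      ∑ i, ∑ j, (l i + l j) * Complex.normSq (M i j)
        = 2 * ∑ i, ∑ j, l i * Complex.normSq (M i j) := by
    intro M hM
    have hswap : ∑ i, ∑ j, l j * Complex.normSq (M i j)
        = ∑ i, ∑ j, l i * Complex.normSq (M i j) := by
      rw [Finset.sum_comm]
      refine Finset.sum_congr rfl fun i _ => Finset.sum_congr rfl fun j _ => ?_
      congr 1
      rw [← hM.apply i j, Complex.star_def, Complex.normSq_conj]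
    have : ∑ i, ∑ j, (l i + l j) * Complex.normSq (M i j)
        = (∑ i, ∑ j, l i * Complex.normSq (M i j))
          + ∑ i, ∑ j, l j * Complex.normSq (M i j) := by
      rw [← Finset.sum_add_distrib]
      refine Finset.sum_congr rfl fun i _ => ?_
      rw [← Finset.sum_add_distrib]
      refine Finset.sum_congr rfl fun j _ => by ring
    rw [this, hswap]; ring
  have CS : S ^ 2 ≤ (2 * X) * (2 * Y) := by
    have hf : ∀ (p : Fin (d+1) × Fin (d+1)),
        (Real.sqrt (l p.1 + l p.2) * ‖A p.1 p.2‖) *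
          (Real.sqrt (l p.1 + l p.2) * ‖B p.1 p.2‖)
        = (l p.1 + l p.2) * (‖A p.1 p.2‖ * ‖B p.1 p.2‖) := by
      intro p
      have : Real.sqrt (l p.1 + l p.2) * Real.sqrt (l p.1 + l p.2) = l p.1 + l p.2 :=
        Real.mul_self_sqrt (add_pos (hipos _) (hipos _)).le
      calc _ = (Real.sqrt (l p.1 + l p.2) * Real.sqrt (l p.1 + l p.2)) *
          (‖A p.1 p.2‖ * ‖B p.1 p.2‖) := by ring
        _ = _ := by rw [this]
    have hsq : ∀ (M : Matrix (Fin (d+1)) (Fin (d+1)) ℂ) (p : Fin (d+1) × Fin (d+1)),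
        (Real.sqrt (l p.1 + l p.2) * ‖M p.1 p.2‖) ^ 2
        = (l p.1 + l p.2) * Complex.normSq (M p.1 p.2) := by
      intro M p
      rw [mul_pow, Real.sq_sqrt (add_pos (hipos _) (hipos _)).le, Complex.sq_norm]
    have main := Finset.sum_mul_sq_le_sq_mul_sq Finset.univ
      (fun p : Fin (d+1) × Fin (d+1) => Real.sqrt (l p.1 + l p.2) * ‖A p.1 p.2‖)
      (fun p : Fin (d+1) × Fin (d+1) => Real.sqrt (l p.1 + l p.2) * ‖B p.1 p.2‖)
    simp only [hf, hsq] at main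
    have eS : S = ∑ p : Fin (d+1) × Fin (d+1),
        (l p.1 + l p.2) * (‖A p.1 p.2‖ * ‖B p.1 p.2‖) := by
      rw [hS]; exact (Fintype.sum_prod_type (f := fun p : Fin (d+1) × Fin (d+1) => (l p.1 + l p.2) * (‖A p.1 p.2‖ * ‖B p.1 p.2‖))).symm
    have eA : ∑ p : Fin (d+1) × Fin (d+1), (l p.1 + l p.2) * Complex.normSq (A p.1 p.2)
        = 2 * X := by rw [Fintype.sum_prod_type]; exact symmsum A hA
    have eB : ∑ p : Fin (d+1) × Fin (d+1), (l p.1 + l p.2) * Complex.normSq (B p.1 p.2)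
        = 2 * Y := by rw [Fintype.sum_prod_type]; exact symmsum B hB
    calc S ^ 2 = (∑ p : Fin (d+1) × Fin (d+1),
          (l p.1 + l p.2) * (‖A p.1 p.2‖ * ‖B p.1 p.2‖)) ^ 2 := by
            rw [eS]
      _ ≤ _ := main
      _ = 2 * X * (2 * Y) := by rw [eA, eB]
  -- finish
  rw [trsq A hA, trsq B hB, ← hX, ← hY, ge_iff_le, div_mul_eq_mul_div,
    div_le_iff₀ (by positivity)]
  have habs0 : 0 ≤ ‖T‖ := norm_nonneg _
  have sq1 : (‖T‖ * (lM + lm)) ^ 2 ≤ ((lM - lm) * S) ^ 2 := by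
    have h1 : 0 ≤ ‖T‖ * (lM + lm) := mul_nonneg habs0 hP.le
    exact pow_le_pow_left₀ h1 habsT 2
  have h3 : ((lM - lm) * S) ^ 2 ≤ (lM - lm) ^ 2 * (2 * X * (2 * Y)) := by
    rw [mul_pow]; exact mul_le_mul_of_nonneg_left CS (sq_nonneg _)
  nlinarith [sq1, h3]
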